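/- arXiv:0908.1838 — 4 statements merged into one kernel-verified Lean document; each statement's English description precedes it below -/
import Mathlib

section
/- Let (Ω, P) be a probability space and k a positive integer. Suppose {W_{n,ε}} (indexed by n ∈ ℕ and ε > 0), {W_n}, {W_ε} and W are random vectors Ω → ℝ^k such that: (i) lim_{ε→0} limsup_{n→∞} P(W_{n,ε} ≠ W_n) = 0; (ii) lim_{ε→0} P(W_ε ≠ W) = 0; and (iii) for every ε > 0, W_{n,ε} converges in distribution to W_ε as n → ∞. Then W_n converges in distribution to W as n → ∞. -/
open MeasureTheory Filter Topology

lemma bcf_integrable_comp {Ω : Type*} [MeasurableSpace Ω] (P : Measure Ω)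
    [IsProbabilityMeasure P] {k : ℕ}
    (f : BoundedContinuousFunction (Fin k → ℝ) ℝ) {g : Ω → Fin k → ℝ}
    (hg : Measurable g) : Integrable (fun ω => f (g ω)) P :=
  (integrable_const ‖f‖).mono'
    (f.continuous.measurable.comp hg).aestronglyMeasurable
    (Filter.Eventually.of_forall fun ω => f.norm_coe_le_norm (g ω))

lemma bcf_integral_diff_bound {Ω : Type*} [MeasurableSpace Ω] (P : Measure Ω)
    [IsProbabilityMeasure P] {k : ℕ}
    (f : BoundedContinuousFunction (Fin k → ℝ) ℝ) {g h : Ω → Fin k → ℝ}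
    (hg : Measurable g) (hh : Measurable h) :
    |∫ ω, f (g ω) ∂P - ∫ ω, f (h ω) ∂P| ≤ 2 * ‖f‖ * (P {ω | g ω ≠ h ω}).toReal := by
  set s := {ω | g ω ≠ h ω} with hs_def
  have hs : MeasurableSet s := by
    have : s = {ω | g ω = h ω}ᶜ := by ext ω; simp [hs_def]
    rw [this]
    exact (measurableSet_eq_fun hg hh).compl
  have hig := bcf_integrable_comp P f hg
  have hih := bcf_integrable_comp P f hh
  rw [← integral_sub hig hih, ← Real.norm_eq_abs]
  calc ‖∫ ω, (f (g ω) - f (h ω)) ∂P‖ ≤ ∫ ω, ‖f (g ω) - f (h ω)‖ ∂P :=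
        norm_integral_le_integral_norm _
    _ ≤ ∫ ω, s.indicator (fun _ => 2 * ‖f‖) ω ∂P := by
        apply integral_mono (hig.sub hih).norm ((integrable_const _).indicator hs)
        intro ω
        by_cases hω : ω ∈ s
        · rw [Set.indicator_of_mem hω]
          calc ‖f (g ω) - f (h ω)‖ ≤ ‖f (g ω)‖ + ‖f (h ω)‖ := norm_sub_le _ _
            _ ≤ ‖f‖ + ‖f‖ := add_le_add (f.norm_coe_le_norm _) (f.norm_coe_le_norm _)
            _ = 2 * ‖f‖ := by ring
        · rw [Set.indicator_of_notMem hω]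
          have : g ω = h ω := not_not.mp hω
          simp [this]
    _ = 2 * ‖f‖ * (P s).toReal := by
        rw [integral_indicator_const _ hs]; simp [mul_comm, Measure.real]

/-- Lemma 3.3: if `W_{n,ε}` coincides with `W_n` with probability tending to 1 (as n → ∞ then
ε → 0), `W_ε` coincides with `W` with probability tending to 1 as ε → 0, and for each ε > 0
`W_{n,ε} →d W_ε`, then `W_n →d W`. Convergence in distribution is expressed through bounded
continuous test functions. -/
theorem changepoint_sandwich_convergence_in_distribution
    {Ω : Type*} [MeasurableSpace Ω] (P : Measure Ω) [IsProbabilityMeasure P]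
    (k : ℕ) (hk : 0 < k)
    (Wne : ℕ → ℝ → Ω → (Fin k → ℝ)) (Wn : ℕ → Ω → (Fin k → ℝ))
    (We : ℝ → Ω → (Fin k → ℝ)) (W : Ω → (Fin k → ℝ))
    (hWne : ∀ n ε, Measurable (Wne n ε)) (hWn : ∀ n, Measurable (Wn n))
    (hWe : ∀ ε, Measurable (We ε)) (hW : Measurable W)
    (h1 : Tendsto (fun ε : ℝ => Filter.limsup (fun n => P {ω | Wne n ε ω ≠ Wn n ω}) atTop)
        (𝓝[>] 0) (𝓝 0))
    (h2 : Tendsto (fun ε : ℝ => P {ω | We ε ω ≠ W ω}) (𝓝[>] 0) (𝓝 0))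
    (h3 : ∀ ε : ℝ, 0 < ε → ∀ f : BoundedContinuousFunction (Fin k → ℝ) ℝ,
        Tendsto (fun n => ∫ ω, f (Wne n ε ω) ∂P) atTop (𝓝 (∫ ω, f (We ε ω) ∂P))) :
    ∀ f : BoundedContinuousFunction (Fin k → ℝ) ℝ,
      Tendsto (fun n => ∫ ω, f (Wn n ω) ∂P) atTop (𝓝 (∫ ω, f (W ω) ∂P)) := by
  intro f
  rw [Metric.tendsto_atTop]
  intro δ hδ
  set M : ℝ := 2 * ‖f‖ + 1 with hM_def
  have hM : 0 < M := by positivity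
  set η : ℝ := δ / (3 * M) with hη_def
  have hη : 0 < η := by positivity
  have hηe : (0 : ENNReal) < ENNReal.ofReal η := ENNReal.ofReal_pos.mpr hη
  -- choose ε
  have hev : ∀ᶠ ε in 𝓝[>] (0:ℝ),
      Filter.limsup (fun n => P {ω | Wne n ε ω ≠ Wn n ω}) atTop < ENNReal.ofReal η ∧
      P {ω | We ε ω ≠ W ω} < ENNReal.ofReal η ∧ 0 < ε := by
    filter_upwards [h1.eventually (Iio_mem_nhds hηe), h2.eventually (Iio_mem_nhds hηe),
      self_mem_nhdsWithin] with ε hε1 hε2 hε3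
    exact ⟨hε1, hε2, hε3⟩
  obtain ⟨ε, hε1, hε2, hε3⟩ := hev.exists
  have hn1 : ∀ᶠ n in atTop, P {ω | Wne n ε ω ≠ Wn n ω} < ENNReal.ofReal η :=
    eventually_lt_of_limsup_lt hε1
  have hn2 : ∀ᶠ n in atTop,
      dist (∫ ω, f (Wne n ε ω) ∂P) (∫ ω, f (We ε ω) ∂P) < δ / 3 :=
    (Metric.tendsto_nhds.mp (h3 ε hε3 f)) (δ/3) (by positivity)
  rw [Filter.eventually_atTop] at hn1 hn2
  obtain ⟨N1, hN1⟩ := hn1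
  obtain ⟨N2, hN2⟩ := hn2
  refine ⟨max N1 N2, fun n hn => ?_⟩
  have hn1' := hN1 n (le_trans (le_max_left _ _) hn)
  have hn2' := hN2 n (le_trans (le_max_right _ _) hn)
  -- bounds
  have key1 := bcf_integral_diff_bound P f (hWn n) (hWne n ε)
  have key2 := bcf_integral_diff_bound P f (hWe ε) hW
  have hMη : M * η = δ / 3 := by
    rw [hη_def, mul_div_assoc', div_eq_div_iff (mul_pos three_pos hM).ne' (by norm_num)]; ring
  have hbound : ∀ {s : Set Ω}, P s < ENNReal.ofReal η → 2 * ‖f‖ * (P s).toReal ≤ δ / 3 := by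
    intro s hs
    have h1' : (P s).toReal ≤ η :=
      ENNReal.toReal_le_of_le_ofReal hη.le hs.le
    calc 2 * ‖f‖ * (P s).toReal ≤ M * η := by
          apply mul_le_mul (by rw [hM_def]; linarith) h1'
            ENNReal.toReal_nonneg hM.le
      _ = δ / 3 := hMη
  have e1 : 2 * ‖f‖ * (P {ω | Wn n ω ≠ Wne n ε ω}).toReal ≤ δ / 3 := by
    apply hbound
    have : {ω | Wn n ω ≠ Wne n ε ω} = {ω | Wne n ε ω ≠ Wn n ω} := by
      ext ω; exact ⟨Ne.symm, Ne.symm⟩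
    rw [this]; exact hn1'
  have e2 : 2 * ‖f‖ * (P {ω | We ε ω ≠ W ω}).toReal ≤ δ / 3 := hbound hε2
  rw [Real.dist_eq]
  calc |∫ ω, f (Wn n ω) ∂P - ∫ ω, f (W ω) ∂P|
      ≤ |∫ ω, f (Wn n ω) ∂P - ∫ ω, f (Wne n ε ω) ∂P|
        + |∫ ω, f (Wne n ε ω) ∂P - ∫ ω, f (We ε ω) ∂P|
        + |∫ ω, f (We ε ω) ∂P - ∫ ω, f (W ω) ∂P| := by
        have := abs_sub_le (∫ ω, f (Wn n ω) ∂P) (∫ ω, f (Wne n ε ω) ∂P) (∫ ω, f (W ω) ∂P)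
        have h2 := abs_sub_le (∫ ω, f (Wne n ε ω) ∂P) (∫ ω, f (We ε ω) ∂P) (∫ ω, f (W ω) ∂P)
        linarith
    _ < δ / 3 + δ / 3 + δ / 3 := by
        rw [Real.dist_eq] at hn2'
        have := le_trans key1 e1
        have := le_trans key2 e2
        linarith
    _ = δ := by ring
end

section
/- Let h > 0 and t ∈ ℝ, let U be a random variable uniformly distributed on [t − h, t + h], and let ε be an integrable real random variable with E[ε] = 0, independent of U. Let α₀, β₀, c ∈ ℝ and let d⁰, d ∈ [t − h, t + h]. Define W = α₀ 1(U ≤ d⁰) + β₀ 1(U > d⁰) + ε. Then E[ (W − c)(1(U ≤ d) − 1(U ≤ d⁰)) ] = ( (β₀ − c) max(d − d⁰, 0) + (c − α₀) max(d⁰ − d, 0) ) / (2h). -/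
open MeasureTheory ProbabilityTheory


private lemma ite_mem_eq_indicator {δ : Type*} (X : δ → ℝ) (a b : ℝ) :
    (fun ω => if X ω ∈ Set.Ioc a b then (1 : ℝ) else 0)
      = (X ⁻¹' Set.Ioc a b).indicator (fun _ => (1 : ℝ)) := by
  ext ω; by_cases hm : X ω ∈ Set.Ioc a b <;> simp [hm]

private lemma ite_le_eq_indicator {δ : Type*} (X : δ → ℝ) (a : ℝ) :
    (fun ω => if X ω ≤ a then (1 : ℝ) else 0)
      = (X ⁻¹' Set.Iic a).indicator (fun _ => (1 : ℝ)) := by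
  ext ω; by_cases hm : X ω ≤ a <;> simp [hm]

/-- Population criterion in the stump change-point model: with `U ~ Uniform[t−h, t+h]`,
`ε` integrable, centered and independent of `U`, and
`W = α₀ 1(U ≤ d⁰) + β₀ 1(U > d⁰) + ε`, one has
`E[(W − c)(1(U ≤ d) − 1(U ≤ d⁰))]
  = ((β₀ − c) max(d − d⁰, 0) + (c − α₀) max(d⁰ − d, 0)) / (2h)`. -/
theorem stump_population_criterion_formula
    {Ω : Type*} [MeasureSpace Ω] [IsProbabilityMeasure (ℙ : Measure Ω)]
    (h t : ℝ) (hh : 0 < h)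
    (U ε : Ω → ℝ) (hU : Measurable U) (hε : Measurable ε)
    (hunif : MeasureTheory.pdf.IsUniform U (Set.Icc (t - h) (t + h)) ℙ)
    (hint : Integrable ε ℙ) (hmean : ∫ ω, ε ω = 0)
    (hind : IndepFun U ε ℙ)
    (α₀ β₀ c d0 d : ℝ)
    (hd0 : d0 ∈ Set.Icc (t - h) (t + h)) (hd : d ∈ Set.Icc (t - h) (t + h)) :
    (∫ ω, ((α₀ * (if U ω ≤ d0 then (1 : ℝ) else 0)
          + β₀ * (if d0 < U ω then (1 : ℝ) else 0) + ε ω) - c)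
        * ((if U ω ≤ d then (1 : ℝ) else 0) - (if U ω ≤ d0 then (1 : ℝ) else 0)))
      = ((β₀ - c) * max (d - d0) 0 + (c - α₀) * max (d0 - d) 0) / (2 * h) := by
  obtain ⟨hd01, hd02⟩ := hd0
  obtain ⟨hd1, hd2⟩ := hd
  set s : Set ℝ := Set.Icc (t - h) (t + h) with hs_def
  -- volume of s
  have hvol : volume s = ENNReal.ofReal (2 * h) := by
    rw [hs_def, Real.volume_Icc]
    ring_nf
  have hs0 : volume s ≠ 0 := by
    rw [hvol]; simp [ENNReal.ofReal_eq_zero]; linarith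
  have hst : volume s ≠ ⊤ := by rw [hvol]; exact ENNReal.ofReal_ne_top
  -- the indicator functions
  set g : ℝ → ℝ := fun u => (if u ≤ d then (1 : ℝ) else 0) - (if u ≤ d0 then (1 : ℝ) else 0)
    with hg_def
  have hgmeas : Measurable g := by
    apply Measurable.sub <;>
      exact Measurable.ite (measurableSet_le measurable_id measurable_const)
        measurable_const measurable_const
  -- pointwise rewriting of the deterministic part
  have key : ∀ u : ℝ,
      (α₀ * (if u ≤ d0 then (1 : ℝ) else 0) + β₀ * (if d0 < u then (1 : ℝ) else 0) - c)
        * g u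
      = (β₀ - c) * (if u ∈ Set.Ioc d0 d then (1 : ℝ) else 0)
        + (c - α₀) * (if u ∈ Set.Ioc d d0 then (1 : ℝ) else 0) := by
    intro u
    simp only [hg_def, Set.mem_Ioc]
    by_cases h1 : u ≤ d0 <;> by_cases h2 : u ≤ d
    · simp [h1, h2, not_lt.mpr h1, not_lt.mpr h2]
    · simp [h1, h2, not_lt.mpr h1, lt_of_not_ge h2]
    · simp [h1, h2, lt_of_not_ge h1, not_lt.mpr h2]
    · simp [h1, h2, lt_of_not_ge h1]
  -- integrability pieces
  have hI1 : Integrable (fun ω => if U ω ∈ Set.Ioc d0 d then (1 : ℝ) else 0) ℙ := by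
    rw [ite_mem_eq_indicator U d0 d]
    exact (integrable_const 1).indicator (hU measurableSet_Ioc)
  have hI2 : Integrable (fun ω => if U ω ∈ Set.Ioc d d0 then (1 : ℝ) else 0) ℙ := by
    rw [ite_mem_eq_indicator U d d0]
    exact (integrable_const 1).indicator (hU measurableSet_Ioc)
  have hIgU : Integrable (fun ω => g (U ω)) ℙ := by
    simp only [hg_def]
    apply Integrable.sub
    · rw [ite_le_eq_indicator U d]
      exact (integrable_const 1).indicator (hU measurableSet_Iic)
    · rw [ite_le_eq_indicator U d0]
      exact (integrable_const 1).indicator (hU measurableSet_Iic)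
  have hindg : IndepFun ε (fun ω => g (U ω)) ℙ :=
    hind.symm.comp measurable_id hgmeas
  have hIεg : Integrable (fun ω => ε ω * g (U ω)) ℙ :=
    hindg.integrable_mul hint hIgU
  -- the ε-term vanishes
  have hεzero : ∫ ω, ε ω * g (U ω) = 0 := by
    have := hindg.integral_mul_eq_mul_integral hint.aestronglyMeasurable hIgU.aestronglyMeasurable
    simpa [hmean] using this
  -- rewrite the integrand
  have hrw : (fun ω => ((α₀ * (if U ω ≤ d0 then (1 : ℝ) else 0)
          + β₀ * (if d0 < U ω then (1 : ℝ) else 0) + ε ω) - c)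
        * ((if U ω ≤ d then (1 : ℝ) else 0) - (if U ω ≤ d0 then (1 : ℝ) else 0)))
      = fun ω => ((β₀ - c) * (if U ω ∈ Set.Ioc d0 d then (1 : ℝ) else 0)
        + (c - α₀) * (if U ω ∈ Set.Ioc d d0 then (1 : ℝ) else 0))
        + ε ω * g (U ω) := by
    funext ω
    have := key (U ω)
    simp only [hg_def] at this ⊢
    nlinarith [this]
  rw [hrw]
  have hsum : Integrable (fun ω => (β₀ - c) * (if U ω ∈ Set.Ioc d0 d then (1 : ℝ) else 0)
      + (c - α₀) * (if U ω ∈ Set.Ioc d d0 then (1 : ℝ) else 0)) ℙ :=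
    (hI1.const_mul _).add (hI2.const_mul _)
  rw [integral_add hsum hIεg, hεzero, add_zero]
  rw [integral_add (hI1.const_mul _) (hI2.const_mul _),
    integral_const_mul, integral_const_mul]
  -- compute each probability
  have hmeasIoc : ∀ a b : ℝ, a ∈ s → b ∈ s →
      ∫ ω, (if U ω ∈ Set.Ioc a b then (1 : ℝ) else 0) = max (b - a) 0 / (2 * h) := by
    intro a b ha hb
    rw [ite_mem_eq_indicator U a b, integral_indicator_const (1 : ℝ) (hU measurableSet_Ioc), smul_eq_mul, mul_one]
    have hP := hunif.measure_preimage hs0 hst (measurableSet_Ioc (a := a) (b := b))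
    have hsub : Set.Ioc a b ⊆ s := by
      intro u hu
      exact ⟨le_of_lt (lt_of_le_of_lt ha.1 hu.1), le_trans hu.2 hb.2⟩
    rw [Set.inter_eq_self_of_subset_right hsub, Real.volume_Ioc, hvol] at hP
    rw [measureReal_def, hP, ENNReal.toReal_div, ENNReal.toReal_ofReal', ENNReal.toReal_ofReal']
    rw [show (2 * h) ⊔ 0 = 2 * h from max_eq_left (by linarith)]
  rw [hmeasIoc d0 d ⟨hd01, hd02⟩ ⟨hd1, hd2⟩, hmeasIoc d d0 ⟨hd1, hd2⟩ ⟨hd01, hd02⟩]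
  field_simp
end

section
/- Let h > 0 and t ∈ ℝ, let U be a random variable uniformly distributed on [t − h, t + h], and let ε be an integrable real random variable with E[ε] = 0, independent of U. Let α₀, β₀, c ∈ ℝ with α₀ < c < β₀, and let d⁰ ∈ [t − h, t + h]. Define W = α₀ 1(U ≤ d⁰) + β₀ 1(U > d⁰) + ε, and for d ∈ [t − h, t + h] set M(d) = E[ (W − c)(1(U ≤ d) − 1(U ≤ d⁰)) ]. Then M(d⁰) = 0 and M(d) > 0 for every d ∈ [t − h, t + h] with d ≠ d⁰; that is, d⁰ is the unique minimizer of M on [t − h, t + h]. -/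
open MeasureTheory ProbabilityTheory

lemma aux_stump_integral {Ω : Type*} [MeasureSpace Ω] [IsProbabilityMeasure (ℙ : Measure Ω)]
    (h t : ℝ) (hh : 0 < h) (U ε : Ω → ℝ) (hU : Measurable U)
    (hunif : MeasureTheory.pdf.IsUniform U (Set.Icc (t - h) (t + h)) ℙ)
    (hint : Integrable ε ℙ) (hmean : ∫ ω, ε ω = 0) (hind : IndepFun U ε ℙ)
    (a b K L : ℝ) (ha : t - h ≤ a) (hab : a < b) (hb : b ≤ t + h) :
    ∫ ω, (K + L * ε ω) * (if a < U ω ∧ U ω ≤ b then (1:ℝ) else 0)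
      = K * ((b - a) / (2 * h)) := by
  set s : Set Ω := U ⁻¹' Set.Ioc a b with hs
  have hsm : MeasurableSet s := hU measurableSet_Ioc
  have hindic : ∀ ω, (if a < U ω ∧ U ω ≤ b then (1:ℝ) else 0)
      = s.indicator (fun _ => (1:ℝ)) ω := by
    intro ω; by_cases hc : a < U ω ∧ U ω ≤ b <;>
      simp [s, Set.indicator_apply, Set.mem_Ioc, hc]
  have hvol : volume (Set.Icc (t - h) (t + h)) = ENNReal.ofReal (2 * h) := by
    rw [Real.volume_Icc]; ring_nf
  have hvne : volume (Set.Icc (t - h) (t + h)) ≠ 0 := by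
    rw [hvol]; simp [ENNReal.ofReal_eq_zero]; linarith
  have hvnt : volume (Set.Icc (t - h) (t + h)) ≠ ⊤ := by
    rw [hvol]; exact ENNReal.ofReal_ne_top
  have hsub : Set.Ioc a b ⊆ Set.Icc (t - h) (t + h) :=
    Set.Ioc_subset_Icc_self.trans (Set.Icc_subset_Icc ha hb)
  have hP : ℙ s = ENNReal.ofReal (b - a) / ENNReal.ofReal (2 * h) := by
    rw [hs, pdf.IsUniform.measure_preimage hvne hvnt hunif measurableSet_Ioc,
      Set.inter_eq_self_of_subset_right hsub, Real.volume_Ioc, hvol]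
  have htoReal : (ℙ s).toReal = (b - a) / (2 * h) := by
    rw [hP, ENNReal.toReal_div, ENNReal.toReal_ofReal (by linarith),
      ENNReal.toReal_ofReal (by linarith)]
  have hind2 : IndepFun (fun ω => s.indicator (fun _ => (1:ℝ)) ω) ε ℙ := by
    have hcomp : (fun ω => s.indicator (fun _ => (1:ℝ)) ω)
        = (fun x : ℝ => (Set.Ioc a b).indicator (fun _ => (1:ℝ)) x) ∘ U := by
      funext ω; by_cases hc : a < U ω ∧ U ω ≤ b <;>
        simp [s, Set.indicator_apply, Set.mem_Ioc, hc]
    rw [hcomp]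
    exact hind.comp (measurable_const.indicator measurableSet_Ioc) measurable_id
  have hintInd : Integrable (fun ω => s.indicator (fun _ => (1:ℝ)) ω) ℙ :=
    (integrable_const (1:ℝ)).indicator hsm
  have hmul : ∫ ω, s.indicator ε ω = 0 := by
    have heq : ∀ ω, s.indicator ε ω = s.indicator (fun _ => (1:ℝ)) ω * ε ω := by
      intro ω; by_cases hω : ω ∈ s <;> simp [hω]
    simp_rw [heq]
    have h0 := hind2.integral_mul_eq_mul_integral hintInd.aestronglyMeasurable hint.aestronglyMeasurable
    rw [hmean, mul_zero] at h0
    simpa using h0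
  simp_rw [hindic]
  have expand : ∀ ω, (K + L * ε ω) * s.indicator (fun _ => (1:ℝ)) ω
      = s.indicator (fun _ => K) ω + L * s.indicator ε ω := by
    intro ω; by_cases hω : ω ∈ s <;> simp [hω] <;> ring
  simp_rw [expand]
  rw [integral_add ((integrable_const K).indicator hsm) ((hint.indicator hsm).const_mul L),
    integral_const_mul, hmul, mul_zero, add_zero, integral_indicator_const _ hsm,
    smul_eq_mul, measureReal_def, htoReal, mul_comm]

/-- Identifiability of the change point in the stump model: with `U ~ Uniform[t−h, t+h]`,
`ε` integrable, centered and independent of `U`, `α₀ < c < β₀`, and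
`W = α₀ 1(U ≤ d⁰) + β₀ 1(U > d⁰) + ε`, the population criterion
`M(d) = E[(W − c)(1(U ≤ d) − 1(U ≤ d⁰))]` vanishes at `d⁰` and is strictly positive at every
other `d ∈ [t−h, t+h]`; that is, `d⁰` is the unique minimizer of `M` on `[t−h, t+h]`. -/
theorem stump_population_criterion_unique_minimizer
    {Ω : Type*} [MeasureSpace Ω] [IsProbabilityMeasure (ℙ : Measure Ω)]
    (h t : ℝ) (hh : 0 < h)
    (U ε : Ω → ℝ) (hU : Measurable U) (hε : Measurable ε)
    (hunif : MeasureTheory.pdf.IsUniform U (Set.Icc (t - h) (t + h)) ℙ)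
    (hint : Integrable ε ℙ) (hmean : ∫ ω, ε ω = 0)
    (hind : IndepFun U ε ℙ)
    (α₀ β₀ c d0 : ℝ) (hαc : α₀ < c) (hcβ : c < β₀)
    (hd0 : d0 ∈ Set.Icc (t - h) (t + h))
    (M : ℝ → ℝ)
    (hM : ∀ d : ℝ, M d =
      ∫ ω, ((α₀ * (if U ω ≤ d0 then (1 : ℝ) else 0)
          + β₀ * (if d0 < U ω then (1 : ℝ) else 0) + ε ω) - c)
        * ((if U ω ≤ d then (1 : ℝ) else 0) - (if U ω ≤ d0 then (1 : ℝ) else 0))) :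
    M d0 = 0 ∧ ∀ d ∈ Set.Icc (t - h) (t + h), d ≠ d0 → 0 < M d := by
  constructor
  · rw [hM d0]
    simp
  · intro d hd hne
    rcases lt_or_gt_of_ne hne with hlt | hgt
    · -- d < d0 : integrand = (c - α₀ + (-1) * ε) * 1(d < U ≤ d0)
      have hpt : ∀ ω, ((α₀ * (if U ω ≤ d0 then (1 : ℝ) else 0)
          + β₀ * (if d0 < U ω then (1 : ℝ) else 0) + ε ω) - c)
          * ((if U ω ≤ d then (1 : ℝ) else 0) - (if U ω ≤ d0 then (1 : ℝ) else 0))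
          = ((c - α₀) + (-1) * ε ω) * (if d < U ω ∧ U ω ≤ d0 then (1:ℝ) else 0) := by
        intro ω
        rcases le_or_gt (U ω) d with h1 | h1
        · have h2 : U ω ≤ d0 := h1.trans hlt.le
          simp [h1, h2, not_lt.mpr h1]
        · rcases le_or_gt (U ω) d0 with h2 | h2
          · simp [not_le.mpr h1, h1, h2, not_lt.mpr h2]; ring
          · simp [not_le.mpr (hlt.trans h2), h2, not_le.mpr h2]
      rw [hM d]
      simp_rw [hpt]
      rw [aux_stump_integral h t hh U ε hU hunif hint hmean hind d d0 (c - α₀) (-1)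
        hd.1 hlt hd0.2]
      exact mul_pos (by linarith) (div_pos (by linarith) (by linarith))
    · -- d0 < d : integrand = (β₀ - c + 1 * ε) * 1(d0 < U ≤ d)
      have hpt : ∀ ω, ((α₀ * (if U ω ≤ d0 then (1 : ℝ) else 0)
          + β₀ * (if d0 < U ω then (1 : ℝ) else 0) + ε ω) - c)
          * ((if U ω ≤ d then (1 : ℝ) else 0) - (if U ω ≤ d0 then (1 : ℝ) else 0))
          = ((β₀ - c) + 1 * ε ω) * (if d0 < U ω ∧ U ω ≤ d then (1:ℝ) else 0) := by
        intro ω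
        rcases le_or_gt (U ω) d0 with h1 | h1
        · have h2 : U ω ≤ d := h1.trans hgt.le
          simp [h1, h2, not_lt.mpr h1]
        · rcases le_or_gt (U ω) d with h2 | h2
          · simp [not_le.mpr h1, h1, h2]; ring
          · simp [not_le.mpr h1, h1, not_le.mpr h2]
      rw [hM d]
      simp_rw [hpt]
      rw [aux_stump_integral h t hh U ε hU hunif hint hmean hind d0 d (β₀ - c) 1
        hd0.1 hgt hd.2]
      exact mul_pos (by linarith) (div_pos (by linarith) (by linarith))
end

section
/- Let h > 0, t ∈ ℝ, c ∈ ℝ, H > 0, and let (U_1, W_1), …, (U_n, W_n) be i.i.d. pairs of real random variables such that U_1 is uniformly distributed on [t − h, t + h] and E[ |W_1 − c| | U_1 ] ≤ H almost surely. Let t − h ≤ a < b < e ≤ t + h. Then E[ | Σ_{i=1}^n (W_i − c) 1(a < U_i ≤ b) | · | Σ_{i=1}^n (W_i − c) 1(b < U_i ≤ e) | ] ≤ n² H² (b − a)(e − b) / (4h²) ≤ n² H² (e − a)² / (4h²). -/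
open MeasureTheory ProbabilityTheory

private lemma aux_fmeas (a b c : ℝ) :
    Measurable (fun p : ℝ × ℝ => |p.2 - c| * (if a < p.1 ∧ p.1 ≤ b then (1 : ℝ) else 0)) := by
  apply Measurable.mul
  · exact (measurable_snd.sub measurable_const).abs
  · have hs : MeasurableSet {p : ℝ × ℝ | a < p.1 ∧ p.1 ≤ b} := by
      have h : {p : ℝ × ℝ | a < p.1 ∧ p.1 ≤ b} = Prod.fst ⁻¹' Set.Ioc a b := rfl
      rw [h]; exact measurable_fst measurableSet_Ioc
    exact Measurable.ite hs measurable_const measurable_const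

/-- Tightness second-moment bound (Billingsley's criterion in the proof of Lemma 3.2):
for i.i.d. pairs `(U_i, W_i)` with `U_1 ~ Uniform[t−h, t+h]` and
`E[|W_1 − c| | U_1] ≤ H` a.s., for `t − h ≤ a < b < e ≤ t + h`,
`E[|∑ (W_i − c)1(a < U_i ≤ b)| · |∑ (W_i − c)1(b < U_i ≤ e)|]
  ≤ n² H² (b−a)(e−b)/(4h²) ≤ n² H² (e−a)²/(4h²)`. -/
theorem tightness_increment_product_bound
    {Ω : Type*} [MeasureSpace Ω] [IsProbabilityMeasure (ℙ : Measure Ω)]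
    (h t c H : ℝ) (hh : 0 < h) (hH : 0 < H)
    (n : ℕ) (hn : 0 < n)
    (UW : Fin n → Ω → ℝ × ℝ)
    (hmeas : ∀ i, Measurable (UW i))
    (hindep : iIndepFun UW ℙ)
    (hident : ∀ i, Measure.map (UW i) ℙ = Measure.map (UW ⟨0, hn⟩) ℙ)
    (hunif : MeasureTheory.pdf.IsUniform (fun ω => (UW ⟨0, hn⟩ ω).1)
      (Set.Icc (t - h) (t + h)) ℙ)
    (hint : Integrable (fun ω => |(UW ⟨0, hn⟩ ω).2 - c|) ℙ)
    (hcond : ∀ᵐ ω ∂(ℙ : Measure Ω),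
      (ℙ[fun ω' => |(UW ⟨0, hn⟩ ω').2 - c| |
        MeasurableSpace.comap (fun ω' => (UW ⟨0, hn⟩ ω').1) inferInstance]) ω ≤ H)
    (a b e : ℝ) (hta : t - h ≤ a) (hab : a < b) (hbe : b < e) (het : e ≤ t + h) :
    (∫ ω, |∑ i, ((UW i ω).2 - c) * (if a < (UW i ω).1 ∧ (UW i ω).1 ≤ b then (1 : ℝ) else 0)|
        * |∑ i, ((UW i ω).2 - c) * (if b < (UW i ω).1 ∧ (UW i ω).1 ≤ e then (1 : ℝ) else 0)|
      ≤ (n : ℝ) ^ 2 * H ^ 2 * (b - a) * (e - b) / (4 * h ^ 2)) ∧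
    (n : ℝ) ^ 2 * H ^ 2 * (b - a) * (e - b) / (4 * h ^ 2)
      ≤ (n : ℝ) ^ 2 * H ^ 2 * (e - a) ^ 2 / (4 * h ^ 2) := by
  have hh2 : (0:ℝ) < 4 * h ^ 2 := by positivity
  constructor
  swap
  · have hx : (0:ℝ) ≤ b - a := by linarith
    have hy : (0:ℝ) ≤ e - b := by linarith
    have h1 : (b - a) * (e - b) ≤ (e - a) ^ 2 := by
      nlinarith [sq_nonneg (b - a), sq_nonneg (e - b), mul_nonneg hx hy]
    have h2 : (0:ℝ) ≤ (n:ℝ) ^ 2 * H ^ 2 := by positivity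
    have h3 : (n:ℝ) ^ 2 * H ^ 2 * (b - a) * (e - b) ≤ (n:ℝ) ^ 2 * H ^ 2 * (e - a) ^ 2 := by
      calc (n:ℝ) ^ 2 * H ^ 2 * (b - a) * (e - b)
          = (n:ℝ) ^ 2 * H ^ 2 * ((b - a) * (e - b)) := by ring
        _ ≤ (n:ℝ) ^ 2 * H ^ 2 * ((e - a) ^ 2) := mul_le_mul_of_nonneg_left h1 h2
        _ = (n:ℝ) ^ 2 * H ^ 2 * (e - a) ^ 2 := by ring
    rw [div_le_div_iff₀ hh2 hh2]
    exact mul_le_mul_of_nonneg_right h3 hh2.le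
  -- main bound
  set i0 : Fin n := ⟨0, hn⟩ with hi0
  set f : ℝ → ℝ → ℝ × ℝ → ℝ :=
    fun p q x => |x.2 - c| * (if p < x.1 ∧ x.1 ≤ q then (1:ℝ) else 0) with hfdef
  have fme : ∀ p q : ℝ, Measurable (f p q) := fun p q => aux_fmeas p q c
  have gmeas : Measurable (fun x : ℝ × ℝ => |x.2 - c|) :=
    (measurable_snd.sub measurable_const).abs
  have habs : ∀ i, Integrable (fun ω => |(UW i ω).2 - c|) ℙ := by
    intro i
    have h0 : Integrable (fun x : ℝ × ℝ => |x.2 - c|) (Measure.map (UW i0) ℙ) :=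
      (integrable_map_measure gmeas.aestronglyMeasurable (hmeas i0).aemeasurable).mpr hint
    have h1 : Integrable (fun x : ℝ × ℝ => |x.2 - c|) (Measure.map (UW i) ℙ) := by
      rw [hident i]; exact h0
    exact (integrable_map_measure gmeas.aestronglyMeasurable (hmeas i).aemeasurable).mp h1
  have hXmeas : ∀ (p q : ℝ) i, Measurable (fun ω => f p q (UW i ω)) :=
    fun p q i => (fme p q).comp (hmeas i)
  have hXnonneg : ∀ (p q : ℝ) i ω, 0 ≤ f p q (UW i ω) := by
    intro p q i ω
    apply mul_nonneg (abs_nonneg _)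
    split <;> norm_num
  have hXle : ∀ (p q : ℝ) i ω, f p q (UW i ω) ≤ |(UW i ω).2 - c| := by
    intro p q i ω
    rw [hfdef]; dsimp only
    split
    · simp
    · simp [abs_nonneg]
  have hXint : ∀ (p q : ℝ) i, Integrable (fun ω => f p q (UW i ω)) ℙ := by
    intro p q i
    refine (habs i).mono ((hXmeas p q i).aestronglyMeasurable) ?_
    filter_upwards with ω
    rw [Real.norm_eq_abs, Real.norm_eq_abs, abs_abs]
    calc |f p q (UW i ω)| = f p q (UW i ω) := abs_of_nonneg (hXnonneg p q i ω)
      _ ≤ |(UW i ω).2 - c| := hXle p q i ω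
  have hXeq : ∀ (p q : ℝ) i, ∫ ω, f p q (UW i ω) ∂ℙ = ∫ ω, f p q (UW i0 ω) ∂ℙ := by
    intro p q i
    rw [← integral_map (hmeas i).aemeasurable (fme p q).aestronglyMeasurable,
        ← integral_map (hmeas i0).aemeasurable (fme p q).aestronglyMeasurable, hident i]
  -- core pointwise bound at index 0
  have core : ∀ p q : ℝ, t - h ≤ p → p ≤ q → q ≤ t + h →
      ∫ ω, f p q (UW i0 ω) ∂ℙ ≤ H * ((q - p) / (2 * h)) := by
    intro p q h1 h2 h3
    have hUm : Measurable (fun ω' => (UW i0 ω').1) := (hmeas i0).fst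
    have hm : MeasurableSpace.comap (fun ω' => (UW i0 ω').1) inferInstance
        ≤ MeasureSpace.toMeasurableSpace := hUm.comap_le
    haveI : SigmaFinite ((ℙ : Measure Ω).trim hm) := by
      haveI : IsFiniteMeasure ((ℙ : Measure Ω).trim hm) := isFiniteMeasure_trim hm
      infer_instance
    set s : Set Ω := (fun ω' => (UW i0 ω').1) ⁻¹' Set.Ioc p q with hsdef
    have hs_m : MeasurableSet[MeasurableSpace.comap (fun ω' => (UW i0 ω').1) inferInstance] s :=
      ⟨Set.Ioc p q, measurableSet_Ioc, rfl⟩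
    have hs : MeasurableSet s := hm _ hs_m
    have hrw : (fun ω => f p q (UW i0 ω)) = s.indicator (fun ω => |(UW i0 ω).2 - c|) := by
      funext ω
      by_cases hω : ω ∈ s
      · have hω' : p < (UW i0 ω).1 ∧ (UW i0 ω).1 ≤ q := hω
        simp [hfdef, Set.indicator_of_mem hω, hω']
      · have hω' : ¬(p < (UW i0 ω).1 ∧ (UW i0 ω).1 ≤ q) := hω
        simp [hfdef, Set.indicator_of_notMem hω, hω']
    have hvol_ne0 : volume (Set.Icc (t-h) (t+h)) ≠ 0 := by
      rw [Real.volume_Icc]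
      simp only [ne_eq, ENNReal.ofReal_eq_zero, not_le]
      linarith
    have hvol_ne_top : volume (Set.Icc (t-h) (t+h)) ≠ ⊤ := by
      rw [Real.volume_Icc]; exact ENNReal.ofReal_ne_top
    have hPs : (ℙ : Measure Ω) s = ENNReal.ofReal (q - p) / ENNReal.ofReal (2 * h) := by
      have hmp := hunif.measure_preimage hvol_ne0 hvol_ne_top
        (measurableSet_Ioc (a := p) (b := q))
      rw [hsdef, hmp]
      have hsub : Set.Ioc p q ⊆ Set.Icc (t-h) (t+h) := fun x hx =>
        ⟨by linarith [hx.1], by linarith [hx.2]⟩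
      rw [Set.inter_eq_self_of_subset_right hsub, Real.volume_Ioc, Real.volume_Icc]
      congr 1
      ring
    have htr : ((ℙ : Measure Ω) s).toReal = (q - p) / (2 * h) := by
      rw [hPs, ENNReal.toReal_div, ENNReal.toReal_ofReal (by linarith : (0:ℝ) ≤ q - p),
        ENNReal.toReal_ofReal (by linarith : (0:ℝ) ≤ 2 * h)]
    calc ∫ ω, f p q (UW i0 ω) ∂ℙ = ∫ ω in s, |(UW i0 ω).2 - c| ∂ℙ := by
          rw [hrw, integral_indicator hs]
      _ = ∫ ω in s, ((ℙ : Measure Ω)[fun ω' => |(UW i0 ω').2 - c| |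
            MeasurableSpace.comap (fun ω' => (UW i0 ω').1) inferInstance]) ω ∂ℙ :=
          (setIntegral_condExp hm hint hs_m).symm
      _ ≤ ∫ _ω in s, H ∂ℙ := setIntegral_mono_ae integrable_condExp.integrableOn
            (integrable_const H).integrableOn hcond
      _ = ((ℙ : Measure Ω) s).toReal * H := by rw [setIntegral_const, smul_eq_mul]; rfl
      _ = H * ((q - p) / (2 * h)) := by rw [htr]; ring
  have hA : ∀ i, ∫ ω, f a b (UW i ω) ∂ℙ ≤ H * ((b - a) / (2 * h)) := by
    intro i; rw [hXeq a b i]; exact core a b hta hab.le (by linarith)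
  have hB : ∀ i, ∫ ω, f b e (UW i ω) ∂ℙ ≤ H * ((e - b) / (2 * h)) := by
    intro i; rw [hXeq b e i]; exact core b e (by linarith) hbe.le het
  have hApos : (0:ℝ) ≤ H * ((b - a) / (2 * h)) :=
    mul_nonneg hH.le (div_nonneg (by linarith) (by linarith))
  have hBintpos : ∀ i, 0 ≤ ∫ ω, f b e (UW i ω) ∂ℙ :=
    fun i => integral_nonneg (fun ω => hXnonneg b e i ω)
  have hdiag : ∀ i ω, f a b (UW i ω) * f b e (UW i ω) = 0 := by
    intro i ω
    rw [hfdef]; dsimp only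
    by_cases h1 : a < (UW i ω).1 ∧ (UW i ω).1 ≤ b
    · have h2 : ¬(b < (UW i ω).1 ∧ (UW i ω).1 ≤ e) := fun h2 => absurd h1.2 (not_le.mpr h2.1)
      simp [h2]
    · simp [h1]
  have hprod : ∀ i j, i ≠ j →
      Integrable (fun ω => f a b (UW i ω) * f b e (UW j ω)) ℙ ∧
      ∫ ω, f a b (UW i ω) * f b e (UW j ω) ∂ℙ
        = (∫ ω, f a b (UW i ω) ∂ℙ) * ∫ ω, f b e (UW j ω) ∂ℙ := by
    intro i j hij
    have hind : IndepFun (fun ω => f a b (UW i ω)) (fun ω => f b e (UW j ω)) ℙ :=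
      (hindep.indepFun hij).comp (fme a b) (fme b e)
    exact ⟨hind.integrable_mul (hXint a b i) (hXint b e j),
      hind.integral_mul_eq_mul_integral (hXint a b i).1 (hXint b e j).1⟩
  have hterm_int : ∀ i j, Integrable (fun ω => f a b (UW i ω) * f b e (UW j ω)) ℙ := by
    intro i j
    rcases eq_or_ne i j with rfl | hij
    · have h0 : (fun ω => f a b (UW i ω) * f b e (UW i ω)) = fun _ => (0:ℝ) :=
        funext (fun ω => hdiag i ω)
      rw [h0]; exact integrable_const 0
    · exact (hprod i j hij).1
  have hGint : Integrable (fun ω => ∑ i, ∑ j, f a b (UW i ω) * f b e (UW j ω)) ℙ :=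
    integrable_finset_sum _ (fun i _ => integrable_finset_sum _ (fun j _ => hterm_int i j))
  have hGval : ∫ ω, (∑ i, ∑ j, f a b (UW i ω) * f b e (UW j ω)) ∂ℙ
      = ∑ i, ∑ j, ∫ ω, f a b (UW i ω) * f b e (UW j ω) ∂ℙ := by
    rw [integral_finset_sum _ (fun i _ => integrable_finset_sum _ (fun j _ => hterm_int i j))]
    exact Finset.sum_congr rfl fun i _ => integral_finset_sum _ (fun j _ => hterm_int i j)
  have hterm_le : ∀ i j, ∫ ω, f a b (UW i ω) * f b e (UW j ω) ∂ℙ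
      ≤ (H * ((b - a) / (2 * h))) * (H * ((e - b) / (2 * h))) := by
    intro i j
    rcases eq_or_ne i j with rfl | hij
    · have h0 : (fun ω => f a b (UW i ω) * f b e (UW i ω)) = fun _ => (0:ℝ) :=
        funext (fun ω => hdiag i ω)
      rw [h0, integral_zero]
      exact mul_nonneg hApos (mul_nonneg hH.le (div_nonneg (by linarith) (by linarith)))
    · rw [(hprod i j hij).2]
      exact mul_le_mul (hA i) (hB j) (hBintpos j) hApos
  have hpt : ∀ ω,
      |∑ i, ((UW i ω).2 - c) * (if a < (UW i ω).1 ∧ (UW i ω).1 ≤ b then (1:ℝ) else 0)|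
        * |∑ i, ((UW i ω).2 - c) * (if b < (UW i ω).1 ∧ (UW i ω).1 ≤ e then (1:ℝ) else 0)|
        ≤ ∑ i, ∑ j, f a b (UW i ω) * f b e (UW j ω) := by
    intro ω
    have key : ∀ p q : ℝ,
        |∑ i, ((UW i ω).2 - c) * (if p < (UW i ω).1 ∧ (UW i ω).1 ≤ q then (1:ℝ) else 0)|
          ≤ ∑ i, f p q (UW i ω) := by
      intro p q
      refine (Finset.abs_sum_le_sum_abs _ _).trans ?_
      apply Finset.sum_le_sum
      intro i _
      rw [hfdef]; dsimp only
      rw [abs_mul]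
      have h1 : |(if p < (UW i ω).1 ∧ (UW i ω).1 ≤ q then (1:ℝ) else 0)|
          = (if p < (UW i ω).1 ∧ (UW i ω).1 ≤ q then (1:ℝ) else 0) := by
        split <;> simp
      rw [h1]
    calc |∑ i, ((UW i ω).2 - c) * (if a < (UW i ω).1 ∧ (UW i ω).1 ≤ b then (1:ℝ) else 0)|
          * |∑ i, ((UW i ω).2 - c) * (if b < (UW i ω).1 ∧ (UW i ω).1 ≤ e then (1:ℝ) else 0)|
        ≤ (∑ i, f a b (UW i ω)) * (∑ j, f b e (UW j ω)) :=
          mul_le_mul (key a b) (key b e) (abs_nonneg _)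
            (Finset.sum_nonneg fun i _ => hXnonneg a b i ω)
      _ = ∑ i, ∑ j, f a b (UW i ω) * f b e (UW j ω) := Finset.sum_mul_sum _ _ _ _
  have hne : h ≠ 0 := hh.ne'
  calc ∫ ω, |∑ i, ((UW i ω).2 - c) * (if a < (UW i ω).1 ∧ (UW i ω).1 ≤ b then (1:ℝ) else 0)|
        * |∑ i, ((UW i ω).2 - c) * (if b < (UW i ω).1 ∧ (UW i ω).1 ≤ e then (1:ℝ) else 0)|
      ≤ ∫ ω, (∑ i, ∑ j, f a b (UW i ω) * f b e (UW j ω)) ∂ℙ := by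
        refine integral_mono_of_nonneg ?_ hGint ?_
        · filter_upwards with ω
          exact mul_nonneg (abs_nonneg _) (abs_nonneg _)
        · filter_upwards with ω
          exact hpt ω
    _ = ∑ i, ∑ j, ∫ ω, f a b (UW i ω) * f b e (UW j ω) ∂ℙ := hGval
    _ ≤ ∑ _i : Fin n, ∑ _j : Fin n, (H * ((b - a) / (2 * h))) * (H * ((e - b) / (2 * h))) :=
        Finset.sum_le_sum (fun i _ => Finset.sum_le_sum fun j _ => hterm_le i j)
    _ = (n : ℝ) * ((n : ℝ) * ((H * ((b - a) / (2 * h))) * (H * ((e - b) / (2 * h))))) := by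
        simp [Finset.sum_const, Finset.card_univ, nsmul_eq_mul]
    _ = (n : ℝ) ^ 2 * H ^ 2 * (b - a) * (e - b) / (4 * h ^ 2) := by
        field_simp
        ring
end
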